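/- Let Δ be a finite set with |Δ| ≥ 2 and let W ≤ Sym(Δ×Δ) be the product-action wreath product Sym(Δ) ↑ Sym(2), i.e., the subgroup generated by all permutations (x,y) ↦ (σx, τy) for σ, τ ∈ Sym(Δ) together with the coordinate swap (x,y) ↦ (y,x). If G ≤ W has exactly 3 orbits on (Δ×Δ)×(Δ×Δ), then the 2-closure of G equals W. -/

import Mathlib

/-- The 2-closure of a permutation group `G ≤ Sym(Ω)`. -/
def twoClosure {Ω : Type*} (G : Subgroup (Equiv.Perm Ω)) : Subgroup (Equiv.Perm Ω) where
  carrier := {σ | ∀ a b : Ω, ∃ g ∈ G, g a = σ a ∧ g b = σ b}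
  one_mem' := fun a b => ⟨1, G.one_mem, rfl, rfl⟩
  mul_mem' := by
    intro σ τ hσ hτ a b
    obtain ⟨g, hg, hga, hgb⟩ := hτ a b
    obtain ⟨h, hh, hha, hhb⟩ := hσ (τ a) (τ b)
    refine ⟨h * g, mul_mem hh hg, ?_, ?_⟩ <;>
      simp [Equiv.Perm.mul_apply, hga, hgb, hha, hhb]
  inv_mem' := by
    intro σ hσ a b
    obtain ⟨g, hg, hga, hgb⟩ := hσ (σ⁻¹ a) (σ⁻¹ b)
    refine ⟨g⁻¹, inv_mem hg, ?_, ?_⟩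
    · have := congrArg (⇑g⁻¹) hga
      simpa [Equiv.Perm.inv_def] using this.symm
    · have := congrArg (⇑g⁻¹) hgb
      simpa [Equiv.Perm.inv_def] using this.symm

/-- A rank 3 permutation group: transitive with exactly 3 orbits on Ω × Ω. -/
def IsRank3 {Ω : Type*} (G : Subgroup (Equiv.Perm Ω)) : Prop :=
  MulAction.IsPretransitive G Ω ∧
    Nat.card (MulAction.orbitRel.Quotient G (Ω × Ω)) = 3


/-- The product-action wreath product `Sym(Δ) ↑ Sym(2) ≤ Sym(Δ × Δ)`: the subgroup generated
by all permutations `(x, y) ↦ (σ x, τ y)` together with the coordinate swap. -/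
def productWreath (Δ : Type*) : Subgroup (Equiv.Perm (Δ × Δ)) :=
  Subgroup.closure
    ({π : Equiv.Perm (Δ × Δ) | ∃ σ τ : Equiv.Perm Δ, ∀ x : Δ × Δ, π x = (σ x.1, τ x.2)} ∪
      {(Equiv.prodComm Δ Δ : Equiv.Perm (Δ × Δ))})

section Aux
variable {Δ : Type*}

open scoped Classical

lemma mem_prodCongr (σ τ : Equiv.Perm Δ) : Equiv.prodCongr σ τ ∈ productWreath Δ :=
  Subgroup.subset_closure (Or.inl ⟨σ, τ, fun x => rfl⟩)

lemma mem_swapW : (Equiv.prodComm Δ Δ : Equiv.Perm (Δ × Δ)) ∈ productWreath Δ :=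
  Subgroup.subset_closure (Or.inr rfl)

/-- the "class" of a pair of points of `Δ × Δ` -/
noncomputable def cl (a b : Δ × Δ) : Fin 3 :=
  if a = b then 0 else if a.1 = b.1 ∨ a.2 = b.2 then 1 else 2

lemma cl_congr {a b c d : Δ × Δ} (h1 : a = b ↔ c = d)
    (h2 : a.1 = b.1 ∨ a.2 = b.2 ↔ c.1 = d.1 ∨ c.2 = d.2) : cl a b = cl c d := by
  unfold cl
  exact if_congr h1 rfl (if_congr h2 rfl rfl)

lemma cl_eq_zero {a b : Δ × Δ} (h : cl a b = 0) : a = b := by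
  by_contra hab
  unfold cl at h
  rw [if_neg hab] at h
  split_ifs at h <;> simp at h

lemma cl_eq_one {a b : Δ × Δ} (h : cl a b = 1) : a ≠ b ∧ (a.1 = b.1 ∨ a.2 = b.2) := by
  unfold cl at h
  split_ifs at h with h1 h2
  · simp at h
  · exact ⟨h1, h2⟩
  · simp at h

lemma cl_eq_two {a b : Δ × Δ} (h : cl a b = 2) : a.1 ≠ b.1 ∧ a.2 ≠ b.2 := by
  unfold cl at h
  split_ifs at h with h1 h2
  · simp at h
  · simp at h
  · push_neg at h2
    exact h2

lemma cl_of_ne_of_E {a b : Δ × Δ} (h : a ≠ b) (hE : a.1 = b.1 ∨ a.2 = b.2) : cl a b = 1 := by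
  unfold cl; rw [if_neg h, if_pos hE]

end Aux

section Aux2
variable {Δ : Type*}

/-- every element of the wreath product preserves the class of pairs -/
lemma cl_invariant {w : Equiv.Perm (Δ × Δ)} (hw : w ∈ productWreath Δ) (a b : Δ × Δ) :
    cl (w a) (w b) = cl a b := by
  let S : Subgroup (Equiv.Perm (Δ × Δ)) :=
    { carrier := {v | ∀ a b : Δ × Δ, cl (v a) (v b) = cl a b}
      one_mem' := fun a b => rfl
      mul_mem' := by
        intro v u hv hu a b
        have : ∀ x, (v * u) x = v (u x) := fun x => rfl
        rw [this, this, hv, hu]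
      inv_mem' := by
        intro v hv a b
        have := hv (v⁻¹ a) (v⁻¹ b)
        rw [Equiv.Perm.inv_def, Equiv.apply_symm_apply, Equiv.apply_symm_apply] at this
        exact this.symm }
  have hWS : productWreath Δ ≤ S := by
    rw [productWreath, Subgroup.closure_le]
    rintro π (⟨σ, τ, hπ⟩ | hπ)
    · intro a b
      refine cl_congr ?_ ?_
      · constructor
        · intro h
          apply π.injective
          rw [hπ a, hπ b] at h ⊢
          exact h
        · intro h; rw [h]
      · rw [hπ a, hπ b]
        simp only [Prod.fst, Prod.snd]
        constructor
        · rintro (h | h)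
          · exact Or.inl (σ.injective h)
          · exact Or.inr (τ.injective h)
        · rintro (h | h)
          · exact Or.inl (congrArg σ h)
          · exact Or.inr (congrArg τ h)
    · simp only [Set.mem_singleton_iff] at hπ
      subst hπ
      intro a b
      refine cl_congr ?_ ?_
      · constructor
        · intro h; exact (Equiv.prodComm Δ Δ).injective h
        · intro h; rw [h]
      · simp [Equiv.prodComm, or_comm]
  exact hWS hw a b

end Aux2


section Comb
variable {Δ : Type*}

/-- three pairwise distinct pairwise "adjacent" points lie in a common row or column -/
lemma triple_lemma {p q r : Δ × Δ} (hpq : p ≠ q) (hpr : p ≠ r) (hqr : q ≠ r)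
    (Epq : p.1 = q.1 ∨ p.2 = q.2) (Epr : p.1 = r.1 ∨ p.2 = r.2)
    (Eqr : q.1 = r.1 ∨ q.2 = r.2) :
    (p.1 = q.1 ∧ p.1 = r.1) ∨ (p.2 = q.2 ∧ p.2 = r.2) := by
  obtain ⟨p1, p2⟩ := p; obtain ⟨q1, q2⟩ := q; obtain ⟨r1, r2⟩ := r
  simp only [Prod.mk.injEq, not_and] at *
  rcases Epq with h1 | h1 <;> rcases Epr with h2 | h2 <;> rcases Eqr with h3 | h3 <;>
    subst h1 <;> (try subst h2) <;> (try subst h3) <;> tauto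

/-- an injective map of a "row" with pairwise adjacent images is consistently
    row-like or column-like -/
lemma row_coherent {f : Δ → Δ × Δ} (hinj : Function.Injective f)
    (hadj : ∀ y y', y ≠ y' → (f y).1 = (f y').1 ∨ (f y).2 = (f y').2) :
    (∀ y y', (f y).1 = (f y').1) ∨ (∀ y y', (f y).2 = (f y').2) := by
  by_contra hcon
  push_neg at hcon
  obtain ⟨⟨y1, y1', h1⟩, ⟨y2, y2', h2⟩⟩ := hcon
  have hy1 : y1 ≠ y1' := fun h => h1 (by rw [h])
  have hy2 : y2 ≠ y2' := fun h => h2 (by rw [h])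
  have e1 : (f y1).2 = (f y1').2 := (hadj y1 y1' hy1).resolve_left h1
  have claim : ∀ z, (f z).2 = (f y1).2 := by
    intro z
    by_cases hz1 : z = y1
    · rw [hz1]
    by_cases hz2 : z = y1'
    · rw [hz2, e1]
    have := triple_lemma (p := f y1) (q := f y1') (r := f z)
      (fun h => hy1 (hinj h)) (fun h => hz1 (hinj h).symm) (fun h => hz2 (hinj h).symm)
      (hadj y1 y1' hy1) (hadj y1 z (fun h => hz1 h.symm)) (hadj y1' z (fun h => hz2 h.symm))
    rcases this with ⟨h, _⟩ | ⟨_, h⟩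
    · exact absurd h h1
    · exact h.symm
  exact h2 ((claim y2).trans (claim y2').symm)

variable [Fintype Δ]

/-- Case A: an adjacency-preserving permutation that maps rows into rows is a product -/
lemma caseA (σ : Equiv.Perm (Δ × Δ)) (hΔ : 2 ≤ Fintype.card Δ)
    (hE : ∀ a b : Δ × Δ, a.1 = b.1 ∨ a.2 = b.2 → (σ a).1 = (σ b).1 ∨ (σ a).2 = (σ b).2)
    (hP : ∀ x y y', (σ (x, y)).1 = (σ (x, y')).1) :
    σ ∈ productWreath Δ := by
  have hne : Nonempty Δ := Fintype.card_pos_iff.mp (by omega)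
  obtain ⟨x₀⟩ := hne
  set f : Δ → Δ := fun x => (σ (x, x₀)).1 with hf
  set g : Δ → Δ := fun y => (σ (x₀, y)).2 with hg
  have husurj : ∀ x, Function.Surjective (fun y => (σ (x, y)).2) := by
    intro x
    rw [← Finite.injective_iff_surjective]
    intro y y' h
    have : σ (x, y) = σ (x, y') := Prod.ext (hP x y y') h
    exact (Prod.ext_iff.mp (σ.injective this)).2
  have hfinj : Function.Injective f := by
    intro x x' h
    by_contra hxx
    obtain ⟨y, hy⟩ := husurj x ((σ (x', x₀)).2)
    have : σ (x, y) = σ (x', x₀) := by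
      refine Prod.ext ?_ hy
      show (σ (x, y)).1 = (σ (x', x₀)).1
      rw [hP x y x₀]
      exact h
    exact hxx (Prod.ext_iff.mp (σ.injective this)).1
  have hform : ∀ x y, σ (x, y) = (f x, g y) := by
    intro x y
    refine Prod.ext (hP x y x₀) ?_
    show (σ (x, y)).2 = (σ (x₀, y)).2
    by_cases hx : x = x₀
    · rw [hx]
    have hEc := hE (x, y) (x₀, y) (Or.inr rfl)
    rcases hEc with h | h
    · exact absurd ((hP x y x₀).symm.trans (h.trans (hP x₀ y x₀))) (fun hh => hx (hfinj hh))
    · exact h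
  have hginj : Function.Injective g := by
    intro y y' h
    have : σ (x₀, y) = σ (x₀, y') := by rw [hform, hform, h]
    exact (Prod.ext_iff.mp (σ.injective this)).2
  have hfbij : Function.Bijective f := ⟨hfinj, Finite.injective_iff_surjective.mp hfinj⟩
  have hgbij : Function.Bijective g := ⟨hginj, Finite.injective_iff_surjective.mp hginj⟩
  exact Subgroup.subset_closure (Or.inl ⟨Equiv.ofBijective f hfbij, Equiv.ofBijective g hgbij,
    fun p => by rw [show p = (p.1, p.2) from rfl, hform p.1 p.2]; rfl⟩)

/-- main combinatorial lemma: adjacency-preserving permutations lie in the wreath product -/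
lemma adj_preserving_mem (σ : Equiv.Perm (Δ × Δ)) (hΔ : 2 ≤ Fintype.card Δ)
    (hE : ∀ a b : Δ × Δ, a.1 = b.1 ∨ a.2 = b.2 → (σ a).1 = (σ b).1 ∨ (σ a).2 = (σ b).2) :
    σ ∈ productWreath Δ := by
  obtain ⟨u, v, huv⟩ := Fintype.exists_pair_of_one_lt_card (by omega : 1 < Fintype.card Δ)
  have hrow : ∀ x, (∀ y y', (σ (x, y)).1 = (σ (x, y')).1) ∨
      (∀ y y', (σ (x, y)).2 = (σ (x, y')).2) := by
    intro x
    apply row_coherent (f := fun y => σ (x, y))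
    · intro y y' h
      exact (Prod.ext_iff.mp (σ.injective h)).2
    · intro y y' _
      exact hE (x, y) (x, y') (Or.inl rfl)
  have hmix : ∀ x x', x ≠ x' → (∀ y y', (σ (x, y)).1 = (σ (x, y')).1) →
      (∀ y y', (σ (x', y)).2 = (σ (x', y')).2) → False := by
    intro x x' hxx hPx hQx'
    have hu : Function.Surjective (fun y => (σ (x, y)).2) := by
      rw [← Finite.injective_iff_surjective]
      intro y y' h
      exact (Prod.ext_iff.mp (σ.injective (Prod.ext (hPx y y') h))).2
    have hv : Function.Surjective (fun y => (σ (x', y)).1) := by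
      rw [← Finite.injective_iff_surjective]
      intro y y' h
      exact (Prod.ext_iff.mp (σ.injective (Prod.ext h (hQx' y y')))).2
    obtain ⟨y1, hy1⟩ := hu ((σ (x', u)).2)
    obtain ⟨y0, hy0⟩ := hv ((σ (x, u)).1)
    have : σ (x, y1) = σ (x', y0) := by
      refine Prod.ext ?_ ?_
      · have hy0' : (σ (x', y0)).1 = (σ (x, u)).1 := hy0
        show (σ (x, y1)).1 = (σ (x', y0)).1
        rw [hy0', hPx y1 u]
      · have hy1' : (σ (x, y1)).2 = (σ (x', u)).2 := hy1
        show (σ (x, y1)).2 = (σ (x', y0)).2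
        rw [hy1', hQx' y0 u]
    exact hxx (Prod.ext_iff.mp (σ.injective this)).1
  by_cases hall : ∀ x, (∀ y y', (σ (x, y)).1 = (σ (x, y')).1)
  · exact caseA σ hΔ hE (fun x => hall x)
  · obtain ⟨x', hx'⟩ := not_forall.mp hall
    have hQx' : ∀ y y', (σ (x', y)).2 = (σ (x', y')).2 := (hrow x').resolve_left hx'
    have hallQ : ∀ x y y', (σ (x, y)).2 = (σ (x, y')).2 := by
      intro x
      rcases hrow x with hPx | hQx
      · have hxx : x ≠ x' := fun h => hx' (h ▸ hPx)
        exact absurd (hmix x x' hxx hPx hQx') (fun h => h)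
      · exact hQx
    set s : Equiv.Perm (Δ × Δ) := (Equiv.prodComm Δ Δ : Equiv.Perm (Δ × Δ)) with hs
    have hsap : ∀ p : Δ × Δ, s p = (p.2, p.1) := fun p => rfl
    have hτ : s * σ ∈ productWreath Δ := by
      apply caseA (s * σ) hΔ
      · intro a b hab
        have := hE a b hab
        show (s (σ a)).1 = (s (σ b)).1 ∨ (s (σ a)).2 = (s (σ b)).2
        rw [hsap, hsap]
        exact this.symm
      · intro x y y'
        show (s (σ (x, y))).1 = (s (σ (x, y'))).1
        rw [hsap, hsap]
        exact hallQ x y y'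
    have : σ = s⁻¹ * (s * σ) := by group
    rw [this]
    exact mul_mem (inv_mem mem_swapW) hτ

end Comb


section Orbits
variable {Δ : Type*} [Fintype Δ]

lemma smul_pair (G : Subgroup (Equiv.Perm (Δ × Δ))) (g : G) (p : (Δ × Δ) × (Δ × Δ)) :
    g • p = ((g : Equiv.Perm (Δ × Δ)) p.1, (g : Equiv.Perm (Δ × Δ)) p.2) := rfl

lemma cl_fibers_orbits (hΔ : 2 ≤ Fintype.card Δ)
    (G : Subgroup (Equiv.Perm (Δ × Δ))) (hGW : G ≤ productWreath Δ)
    (hrank : Nat.card (MulAction.orbitRel.Quotient G ((Δ × Δ) × (Δ × Δ))) = 3)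
    (p q : (Δ × Δ) × (Δ × Δ)) (h : cl p.1 p.2 = cl q.1 q.2) :
    ∃ g : G, g • p = q := by
  obtain ⟨u, v, huv⟩ := Fintype.exists_pair_of_one_lt_card (by omega : 1 < Fintype.card Δ)
  have hwd : ∀ a b : (Δ × Δ) × (Δ × Δ), MulAction.orbitRel G ((Δ × Δ) × (Δ × Δ)) a b →
      cl a.1 a.2 = cl b.1 b.2 := by
    intro a b hab
    rw [MulAction.orbitRel_apply, MulAction.mem_orbit_iff] at hab
    obtain ⟨g, hg⟩ := hab
    rw [← hg, smul_pair]
    exact cl_invariant (hGW g.2) b.1 b.2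
  set φ : MulAction.orbitRel.Quotient G ((Δ × Δ) × (Δ × Δ)) → Fin 3 :=
    Quotient.lift (fun p : (Δ × Δ) × (Δ × Δ) => cl p.1 p.2) hwd with hφ
  have hsurj : Function.Surjective φ := by
    intro i
    fin_cases i
    · exact ⟨⟦(((u, u), (u, u)))⟧, by show cl (u, u) (u, u) = 0; unfold cl; rw [if_pos rfl]⟩
    · refine ⟨⟦(((u, u), (u, v)))⟧, ?_⟩
      show cl (u, u) (u, v) = 1
      exact cl_of_ne_of_E (by simp [Prod.ext_iff, huv]) (Or.inl rfl)
    · refine ⟨⟦(((u, u), (v, v)))⟧, ?_⟩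
      show cl (u, u) (v, v) = 2
      unfold cl
      rw [if_neg (by simp [Prod.ext_iff, huv]), if_neg (by simp [huv])]
  have hbij : Function.Bijective φ := by
    rw [Nat.bijective_iff_surjective_and_card]
    exact ⟨hsurj, by rw [hrank]; simp⟩
  have : (⟦p⟧ : MulAction.orbitRel.Quotient G ((Δ × Δ) × (Δ × Δ))) = ⟦q⟧ :=
    hbij.1 (show φ ⟦p⟧ = φ ⟦q⟧ from h)
  have hrel : p ∈ MulAction.orbit G q := MulAction.orbitRel_apply.mp (Quotient.exact this)
  obtain ⟨g, hg⟩ := MulAction.mem_orbit_iff.mp hrel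
  exact ⟨g⁻¹, by rw [← hg, smul_smul, inv_mul_cancel, one_smul]⟩

end Orbits


/-- If `|Δ| ≥ 2` and `G ≤ Sym(Δ) ↑ Sym(2)` has exactly 3 orbits on pairs,
then the 2-closure of `G` is the full wreath product `Sym(Δ) ↑ Sym(2)`. -/
theorem rank3_productAction_twoClosure {Δ : Type*} [Fintype Δ]
    (hΔ : 2 ≤ Fintype.card Δ)
    (G : Subgroup (Equiv.Perm (Δ × Δ))) (hGW : G ≤ productWreath Δ)
    (hrank : Nat.card (MulAction.orbitRel.Quotient G ((Δ × Δ) × (Δ × Δ))) = 3) :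
    twoClosure G = productWreath Δ := by
  apply le_antisymm
  · -- twoClosure G ≤ W
    intro σ hσ
    have hcl : ∀ a b : Δ × Δ, cl (σ a) (σ b) = cl a b := by
      intro a b
      obtain ⟨g, hg, h1, h2⟩ := hσ a b
      rw [← h1, ← h2]
      exact cl_invariant (hGW hg) a b
    apply adj_preserving_mem σ hΔ
    intro a b hab
    by_cases h : a = b
    · subst h; exact Or.inl rfl
    · have h1 : cl a b = 1 := cl_of_ne_of_E h hab
      exact (cl_eq_one ((hcl a b).trans h1)).2
  · -- W ≤ twoClosure G
    intro w hw a b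
    have h : cl ((w a, w b) : (Δ × Δ) × (Δ × Δ)).1 ((w a, w b) : (Δ × Δ) × (Δ × Δ)).2 =
        cl ((a, b) : (Δ × Δ) × (Δ × Δ)).1 ((a, b) : (Δ × Δ) × (Δ × Δ)).2 :=
      cl_invariant hw a b
    obtain ⟨g, hg⟩ := cl_fibers_orbits hΔ G hGW hrank ((a, b)) ((w a, w b)) h.symm
    rw [smul_pair] at hg
    exact ⟨(g : Equiv.Perm (Δ × Δ)), g.2, (Prod.ext_iff.mp hg).1, (Prod.ext_iff.mp hg).2⟩
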